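/- In G = F₂ × ℤ², for any vectors b, c ∈ ℤ², let H1 = ⟨(x³, (3,3)), (yx, b), (y³xy⁻², c), (1, (1,1))⟩ and H2 = ⟨(x², (2,2)), (y x y⁻¹, (0,0))⟩. Then H1 ∩ H2 = ⟨(x⁶, (6,6)), (y x³ y⁻¹, (0,0))⟩. -/

import Mathlib

namespace ParamExampleCase4

abbrev F₂ := FreeGroup (Fin 2)
abbrev A := Multiplicative (ℤ × ℤ)

def x : F₂ := FreeGroup.of 0
def y : F₂ := FreeGroup.of 1

/-- The vector `a ∈ ℤ²` viewed multiplicatively. -/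
def v (a : ℤ × ℤ) : A := Multiplicative.ofAdd a

namespace Case4Aux

inductive Dir | xp | xm | yp | ym deriving DecidableEq
instance : Fintype Dir := ⟨{.xp, .xm, .yp, .ym}, fun d => by cases d <;> simp⟩
def Dir.inv : Dir → Dir | .xp => .xm | .xm => .xp | .yp => .ym | .ym => .yp
@[simp] lemma Dir.inv_inv (d : Dir) : d.inv.inv = d := by cases d <;> rfl

inductive C5 | c0 | c1 | c2 | c3 | c4 deriving DecidableEq
instance : Fintype C5 := ⟨{.c0, .c1, .c2, .c3, .c4}, fun d => by cases d <;> simp⟩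

open Dir C5

def fx : C5 → Option C5 | c0 => some c1 | c1 => some c2 | c2 => some c0 | c3 => some c4 | c4 => none
def fxi : C5 → Option C5 | c1 => some c0 | c2 => some c1 | c0 => some c2 | c4 => some c3 | c3 => none
def fy : C5 → Option C5 | c1 => some c0 | c3 => some c1 | c4 => some c3 | _ => none
def fyi : C5 → Option C5 | c0 => some c1 | c1 => some c3 | c3 => some c4 | _ => none

def miss : C5 → Dir → Bool
  | c4, xp => true | c3, xm => true | c0, yp => true | c2, yp => true
  | c2, ym => true | c4, ym => true | _, _ => false

def nb (a b : Dir) : Prop := a ≠ b.inv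

def Ok : C5 × List Dir → Prop := fun s => s.2.Chain' nb ∧ ∀ r ∈ s.2.getLast?, miss s.1 r = true

def step (f : C5 → Option C5) (d : Dir) : C5 × List Dir → C5 × List Dir
  | (c, []) => match f c with | some c' => (c', []) | none => (c, [d])
  | (c, e :: t) => if e = d.inv then (c, t) else (c, d :: e :: t)

lemma nb_of_ne {d e : Dir} (he : ¬ e = d.inv) : nb d e := by
  intro h; exact he (by rw [h, Dir.inv_inv])

lemma step_ok {f : C5 → Option C5} {d : Dir} (hf : ∀ c, f c = none → miss c d = true)
    {s : C5 × List Dir} (hs : Ok s) : Ok (step f d s) := by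
  obtain ⟨c, w⟩ := s
  match w with
  | [] =>
    cases hfc : f c with
    | some c' => simp [step, hfc, Ok, List.Chain']
    | none =>
      refine ⟨by simp [step, hfc, List.Chain'], ?_⟩
      simp only [step, hfc]
      intro r hr
      simp only [List.getLast?_singleton, Option.mem_def, Option.some.injEq] at hr
      subst hr; exact hf c hfc
  | e :: t =>
    by_cases he : e = d.inv
    · simp only [step, he, if_pos rfl]
      refine ⟨hs.1.tail, ?_⟩
      intro r hr
      refine hs.2 r ?_
      cases t with
      | nil => simp at hr
      | cons a u => simpa [List.getLast?_cons_cons] using hr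
    · simp only [step, if_neg he]
      refine ⟨List.isChain_cons_cons.mpr ⟨nb_of_ne he, hs.1⟩, ?_⟩
      intro r hr
      refine hs.2 r ?_
      simpa [List.getLast?_cons_cons] using hr

lemma step_step {f f' : C5 → Option C5} {d : Dir}
    (hff' : ∀ a b, f a = some b ↔ f' b = some a)
    (hf : ∀ c, f c = none ↔ miss c d = true)
    (hf' : ∀ c, f' c = none ↔ miss c d.inv = true)
    {s : C5 × List Dir} (hs : Ok s) : step f' d.inv (step f d s) = s := by
  obtain ⟨c, w⟩ := s
  match w with
  | [] =>
    cases hfc : f c with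
    | some c' =>
      have h2 : f' c' = some c := (hff' c c').mp hfc
      simp [step, hfc, h2]
    | none => simp [step, hfc, Dir.inv_inv]
  | e :: t =>
    by_cases he : e = d.inv
    · subst he
      simp only [step, if_pos rfl]
      match t with
      | [] =>
        have hm : miss c d.inv = true := by
          refine hs.2 d.inv ?_; simp
        have : f' c = none := (hf' c).mpr hm
        simp [step, this]
      | a :: u =>
        have ha : ¬ a = d := by
          have := (List.isChain_cons_cons.mp hs.1).1
          simp only [nb] at this
          intro h; subst h
          exact this rfl
        simp [step, ha]
    · simp only [step, if_neg he]
      have : ¬ (d = d.inv.inv) → False := by simp [Dir.inv_inv]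
      simp [step, Dir.inv_inv]


abbrev XS := {s : C5 × List Dir // Ok s}

def Ex : XS ≃ XS where
  toFun s := ⟨step fx xp s.1, step_ok (by decide) s.2⟩
  invFun s := ⟨step fxi xm s.1, step_ok (by decide) s.2⟩
  left_inv s := Subtype.ext (step_step (by decide) (by decide) (by decide) s.2)
  right_inv s := Subtype.ext (step_step (f := fxi) (f' := fx) (d := xm) (by decide) (by decide) (by decide) s.2)

def Ey : XS ≃ XS where
  toFun s := ⟨step fy yp s.1, step_ok (by decide) s.2⟩
  invFun s := ⟨step fyi ym s.1, step_ok (by decide) s.2⟩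
  left_inv s := Subtype.ext (step_step (by decide) (by decide) (by decide) s.2)
  right_inv s := Subtype.ext (step_step (f := fyi) (f' := fy) (d := ym) (by decide) (by decide) (by decide) s.2)

def act : F₂ →* Equiv.Perm XS := FreeGroup.lift ![Ex, Ey]

@[simp] lemma act_x : act x = Ex := by simp [act, x]
@[simp] lemma act_y : act y = Ey := by simp [act, y]

def s0 : XS := ⟨(c0, []), ⟨List.isChain_nil, by simp⟩⟩


def L : Subgroup F₂ := Subgroup.closure {x ^ 3, y ^ 3}

def tau : C5 → F₂
  | c0 => 1 | c1 => x⁻¹ | c2 => x | c3 => y * x⁻¹ | c4 => x * y * x⁻¹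

def g (c : C5) : List Dir → F₂
  | [] => tau c
  | [xp] => tau c
  | xp :: xp :: t => x * g c t
  | xp :: xm :: t => g c (xm :: t)
  | xp :: yp :: t => g c (yp :: t)
  | xp :: ym :: t => g c (ym :: t)
  | [xm] => (match c with | c3 => y * x⁻¹ | _ => x⁻¹ * tau c)
  | xm :: xm :: t => x⁻¹ * g c t
  | xm :: xp :: t => x⁻¹ * g c (xp :: t)
  | xm :: yp :: t => x⁻¹ * g c (yp :: t)
  | xm :: ym :: t => x⁻¹ * g c (ym :: t)
  | [yp] => (match c with | c0 => y⁻¹ | c2 => y | _ => 1)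
  | [yp, xp] => y * y * x⁻¹
  | yp :: xp :: ym :: u => y * g c u
  | yp :: xp :: xp :: t => y * g c (yp :: xp :: t)
  | yp :: xp :: xm :: t => y * g c (yp :: xm :: t)
  | yp :: xp :: yp :: t => y * g c (yp :: yp :: t)
  | [yp, xm] => y⁻¹ * x⁻¹
  | yp :: xm :: ym :: u => y⁻¹ * g c u
  | yp :: xm :: xp :: t => y⁻¹ * g c (yp :: xp :: t)
  | yp :: xm :: xm :: t => y⁻¹ * g c (yp :: xm :: t)
  | yp :: xm :: yp :: t => y⁻¹ * g c (yp :: yp :: t)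
  | yp :: yp :: t => y * g c (yp :: t)
  | yp :: ym :: t => y * g c (ym :: t)
  | ym :: t => g c t
  termination_by w => w.length
  decreasing_by all_goals simp +arith +decide

def gq (s : XS) : F₂ ⧸ L := QuotientGroup.mk (g s.1.1 s.1.2)


lemma hx3 : (x * x * x : F₂) ∈ L := by
  have h : (x * x * x : F₂) = x ^ 3 := by rw [pow_succ, pow_succ, pow_one]
  rw [h]; exact Subgroup.subset_closure (by simp)

lemma hy3 : (y * y * y : F₂) ∈ L := by
  have h : (y * y * y : F₂) = y ^ 3 := by rw [pow_succ, pow_succ, pow_one]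
  rw [h]; exact Subgroup.subset_closure (by simp)

lemma condX_raw (c : C5) (w : List Dir) (ok : Ok (c, w)) :
    (QuotientGroup.mk (g (step fx xp (step fx xp (c, w))).1 (step fx xp (step fx xp (c, w))).2) : F₂ ⧸ L)
      = QuotientGroup.mk (x * g c w) := by
  match w with
  | [] =>
    cases c
    · refine congrArg _ ?_; simp [step, fx, Dir.inv, g, tau]
    · refine congrArg _ ?_; simp [step, fx, Dir.inv, g, tau]
    · have e1 : (step fx xp (step fx xp (c2, ([] : List Dir)))) = (c1, []) := by
        simp [step, fx]
      rw [e1, QuotientGroup.eq]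
      simp only [g, tau]
      have h : (x⁻¹ : F₂)⁻¹ * (x * x) = x * x * x := by group
      rw [h]; exact hx3
    · refine congrArg _ ?_; simp [step, fx, Dir.inv, g, tau]; group
    · refine congrArg _ ?_; simp [step, fx, Dir.inv, g, tau]
  | [xm] =>
    have hm : miss c xm = true := ok.2 xm (by simp)
    cases c
    · simp [miss] at hm
    · simp [miss] at hm
    · simp [miss] at hm
    · refine congrArg _ ?_; simp [step, fx, Dir.inv, g, tau]; group
    · simp [miss] at hm
  | xm :: xm :: t' =>
    refine congrArg _ ?_; simp [step, fx, Dir.inv, g, tau]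
  | xm :: xp :: t' =>
    exact absurd (List.isChain_cons_cons.mp ok.1).1 (by simp [nb, Dir.inv])
  | xm :: yp :: t' =>
    refine congrArg _ ?_; simp [step, fx, Dir.inv, g, tau]
  | xm :: ym :: t' =>
    refine congrArg _ ?_; simp [step, fx, Dir.inv, g, tau]
  | xp :: t =>
    refine congrArg _ ?_; simp [step, fx, Dir.inv, g, tau]
  | yp :: t =>
    refine congrArg _ ?_; simp [step, fx, Dir.inv, g, tau]
  | ym :: t =>
    refine congrArg _ ?_; simp [step, fx, Dir.inv, g, tau]

lemma condY_raw (c : C5) (w : List Dir) (ok : Ok (c, w)) :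
    (QuotientGroup.mk (g (step fy yp (step fx xp (step fyi ym (c, w)))).1
        (step fy yp (step fx xp (step fyi ym (c, w)))).2) : F₂ ⧸ L)
      = QuotientGroup.mk (y * g c w) := by
  match w with
  | [] =>
    cases c <;>
      · refine congrArg _ ?_
        simp [step, fx, fy, fyi, Dir.inv, g, tau]
        try group
  | [yp] =>
    have hm : miss c yp = true := ok.2 yp (by simp)
    cases c
    · refine congrArg _ ?_; simp [step, fx, fy, fyi, Dir.inv, g, tau]
    · simp [miss] at hm
    · have e1 : (step fy yp (step fx xp (step fyi ym (c2, [yp])))) = (c0, [yp]) := by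
        simp [step, fx, fy, fyi, Dir.inv]
      rw [e1, QuotientGroup.eq]
      simp only [g, tau]
      have h : (y⁻¹ : F₂)⁻¹ * (y * y) = y * y * y := by group
      rw [h]; exact hy3
    · simp [miss] at hm
    · simp [miss] at hm
  | [yp, xm] =>
    have hm : miss c xm = true := ok.2 xm (by simp)
    cases c
    · simp [miss] at hm
    · simp [miss] at hm
    · simp [miss] at hm
    · refine congrArg _ ?_; simp [step, fx, fy, fyi, Dir.inv, g, tau]
    · simp [miss] at hm
  | yp :: xm :: xp :: u =>
    exact absurd (List.isChain_cons_cons.mp (ok.1.tail)).1 (by simp [nb, Dir.inv])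
  | yp :: xm :: xm :: u =>
    refine congrArg _ ?_; simp [step, fx, fy, fyi, Dir.inv, g, tau]
  | yp :: xm :: yp :: u =>
    refine congrArg _ ?_; simp [step, fx, fy, fyi, Dir.inv, g, tau]
  | yp :: xm :: ym :: u =>
    refine congrArg _ ?_; simp [step, fx, fy, fyi, Dir.inv, g, tau]
  | [yp, xp] =>
    refine congrArg _ ?_; simp [step, fx, fy, fyi, Dir.inv, g, tau]
  | yp :: xp :: u =>
    refine congrArg _ ?_; simp [step, fx, fy, fyi, Dir.inv, g, tau]
  | yp :: yp :: u =>
    refine congrArg _ ?_; simp [step, fx, fy, fyi, Dir.inv, g, tau]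
  | yp :: ym :: u =>
    exact absurd (List.isChain_cons_cons.mp ok.1).1 (by simp [nb, Dir.inv])
  | xp :: t =>
    refine congrArg _ ?_; simp [step, fx, fy, fyi, Dir.inv, g, tau]
  | xm :: t =>
    refine congrArg _ ?_; simp [step, fx, fy, fyi, Dir.inv, g, tau]
  | ym :: t =>
    refine congrArg _ ?_; simp [step, fx, fy, fyi, Dir.inv, g, tau]


lemma condX (s : XS) : gq (Ex (Ex s)) = x • gq s := by
  obtain ⟨⟨c, w⟩, ok⟩ := s
  exact condX_raw c w ok

lemma condY (s : XS) : gq (Ey (Ex (Ey.symm s))) = y • gq s := by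
  obtain ⟨⟨c, w⟩, ok⟩ := s
  exact condY_raw c w ok

def a2 : F₂ →* F₂ := FreeGroup.lift ![x * x, y * x * y⁻¹]

lemma cocycle (w : F₂) : ∀ s : XS, gq (act (a2 w) s) = w • gq s := by
  induction w using FreeGroup.induction_on with
  | C1 => intro s; simp
  | of i =>
    intro s
    match i with
    | 0 =>
      have h1 : act (a2 (FreeGroup.of (0 : Fin 2))) = Ex * Ex := by
        rw [show a2 (FreeGroup.of (0 : Fin 2)) = x * x by simp [a2], map_mul, act_x]
      show gq (act (a2 (FreeGroup.of (0 : Fin 2))) s) = x • gq s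
      rw [h1, Equiv.Perm.mul_apply]
      exact condX s
    | 1 =>
      have h1 : act (a2 (FreeGroup.of (1 : Fin 2))) = Ey * Ex * Ey⁻¹ := by
        rw [show a2 (FreeGroup.of (1 : Fin 2)) = y * x * y⁻¹ by simp [a2],
          map_mul, map_mul, map_inv, act_x, act_y]
      show gq (act (a2 (FreeGroup.of (1 : Fin 2))) s) = y • gq s
      rw [h1, Equiv.Perm.mul_apply, Equiv.Perm.mul_apply]
      have h2 : (Ey⁻¹ : Equiv.Perm XS) s = Ey.symm s := rfl
      rw [h2]
      exact condY s
  | inv_of i h =>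
    intro s
    have h' := h ((act (a2 (pure i)))⁻¹ s)
    rw [show (act (a2 (FreeGroup.of i))) ((act (a2 (pure i)))⁻¹ s) = s from Equiv.apply_symm_apply _ _] at h'
    rw [map_inv, map_inv]
    rw [eq_comm, inv_smul_eq_iff]
    exact h'
  | mul w1 w2 h1 h2 =>
    intro s
    rw [map_mul, map_mul, Equiv.Perm.mul_apply, h1, h2, mul_smul]

def St : Subgroup F₂ where
  carrier := {u | act u s0 = s0}
  one_mem' := by simp
  mul_mem' := by
    intro a b ha hb
    simp only [Set.mem_setOf_eq] at *
    rw [map_mul, Equiv.Perm.mul_apply, hb, ha]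
  inv_mem' := by
    intro a ha
    simp only [Set.mem_setOf_eq] at *
    rw [map_inv]
    conv_lhs => rw [← ha]
    exact Equiv.symm_apply_apply _ _

lemma gen1_mem : (x ^ 3 : F₂) ∈ St := by
  show act (x ^ 3) s0 = s0
  rw [map_pow, act_x, pow_succ, pow_succ, pow_one, Equiv.Perm.mul_apply, Equiv.Perm.mul_apply]
  exact Subtype.ext rfl

lemma gen2_mem : (y * x : F₂) ∈ St := by
  show act (y * x) s0 = s0
  rw [map_mul, act_x, act_y, Equiv.Perm.mul_apply]
  exact Subtype.ext rfl

lemma gen3_mem : (y ^ 3 * x * (y ^ 2)⁻¹ : F₂) ∈ St := by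
  show act (y ^ 3 * x * (y ^ 2)⁻¹) s0 = s0
  rw [map_mul, map_mul, map_inv, map_pow, map_pow, act_x, act_y]
  simp only [pow_succ, pow_one, mul_inv_rev, Equiv.Perm.mul_apply]
  have h2 : ∀ s : XS, (Ey⁻¹ : Equiv.Perm XS) s = Ey.symm s := fun _ => rfl
  rw [h2, h2]
  exact Subtype.ext rfl

def K1c : Subgroup F₂ := Subgroup.closure {x ^ 3, y * x, y ^ 3 * x * (y ^ 2)⁻¹, 1}

lemma lemmaM {w : F₂} (h : a2 w ∈ K1c) : w ∈ L := by
  have hK : K1c ≤ St := by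
    rw [K1c, Subgroup.closure_le]
    rintro u (rfl | rfl | rfl | rfl)
    · exact gen1_mem
    · exact gen2_mem
    · exact gen3_mem
    · exact one_mem St
  have hfix : act (a2 w) s0 = s0 := hK h
  have hc := cocycle w s0
  rw [hfix] at hc
  have hgq : gq s0 = QuotientGroup.mk 1 := by simp [gq, s0, g, tau]
  rw [hgq] at hc
  have : (QuotientGroup.mk (1 : F₂) : F₂ ⧸ L) = QuotientGroup.mk (w * 1) := hc
  have h2 := QuotientGroup.eq.mp this
  simpa using h2


lemma range_fin2 {α : Type*} (f : Fin 2 → α) : Set.range f = {f 0, f 1} := by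
  ext a
  constructor
  · rintro ⟨i, rfl⟩
    fin_cases i
    · exact Set.mem_insert _ _
    · exact Set.mem_insert_of_mem _ rfl
  · rintro (rfl | rfl)
    exacts [⟨0, rfl⟩, ⟨1, rfl⟩]

end Case4Aux

lemma v_mul (a₁ a₂ : ℤ × ℤ) : v a₁ * v a₂ = v (a₁ + a₂) := rfl

lemma v_sq (a : ℤ × ℤ) : v a ^ 2 = v (a + a) := by
  rw [pow_succ, pow_one, v_mul]

lemma v_cube (a : ℤ × ℤ) : v a ^ 3 = v (a + a + a) := by
  rw [pow_succ, pow_succ, pow_one, v_mul, v_mul]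

lemma v22_cube : v (2, 2) ^ 3 = v (6, 6) := by
  rw [v_cube]; norm_num

lemma v33_sq : v (3, 3) ^ 2 = v (6, 6) := by
  rw [v_sq]; norm_num

lemma v00_one : v (0, 0) = 1 := rfl

lemma v00_cube : v (0, 0) ^ 3 = v (0, 0) := by
  rw [v_cube]; norm_num


/-- In `G = F₂ × ℤ²`, for any `b, c ∈ ℤ²`, with
`H1 = ⟨(x³,(3,3)), (yx,b), (y³xy⁻²,c), (1,(1,1))⟩` and
`H2 = ⟨(x²,(2,2)), (yxy⁻¹,(0,0))⟩`, one has
`H1 ∩ H2 = ⟨(x⁶,(6,6)), (yx³y⁻¹,(0,0))⟩`. -/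
theorem case4_intersection (b c : ℤ × ℤ) :
    (Subgroup.closure {(x ^ 3, v (3, 3)), (y * x, v b),
        (y ^ 3 * x * (y ^ 2)⁻¹, v c), (1, v (1, 1))} ⊓
      Subgroup.closure {(x ^ 2, v (2, 2)), (y * x * y⁻¹, v (0, 0))} :
      Subgroup (F₂ × A)) =
    Subgroup.closure {(x ^ 6, v (6, 6)), (y * x ^ 3 * y⁻¹, v (0, 0))} := by
  apply le_antisymm
  · rintro ⟨gf, ga⟩ hg
    rw [Subgroup.mem_inf] at hg
    obtain ⟨h1, h2⟩ := hg
    set Φ : F₂ →* F₂ × A :=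
      FreeGroup.lift ![((x ^ 2 : F₂), v (2, 2)), ((y * x * y⁻¹ : F₂), v (0, 0))] with hΦ
    obtain ⟨w, hw⟩ : (gf, ga) ∈ Φ.range := by
      rw [hΦ, FreeGroup.range_lift_eq_closure, Case4Aux.range_fin2]
      simpa using h2
    have hfst : gf ∈ Case4Aux.K1c := by
      have h' := Subgroup.mem_map_of_mem (MonoidHom.fst F₂ A) h1
      rw [MonoidHom.map_closure] at h'
      have himg : (MonoidHom.fst F₂ A) '' {(x ^ 3, v (3, 3)), (y * x, v b),
          (y ^ 3 * x * (y ^ 2)⁻¹, v c), (1, v (1, 1))} =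
          ({x ^ 3, y * x, y ^ 3 * x * (y ^ 2)⁻¹, 1} : Set F₂) := by
        simp [Set.image_insert_eq]
      rw [himg] at h'
      exact h'
    have hcomp : (MonoidHom.fst F₂ A).comp Φ = Case4Aux.a2 := by
      apply FreeGroup.ext_hom
      intro a
      match a with
      | 0 =>
        rw [show Case4Aux.a2 (FreeGroup.of (0 : Fin 2)) = x * x by simp [Case4Aux.a2]]
        rw [MonoidHom.comp_apply, hΦ, FreeGroup.lift_apply_of]
        show (x ^ 2 : F₂) = x * x
        rw [pow_succ, pow_one]
      | 1 =>
        rw [show Case4Aux.a2 (FreeGroup.of (1 : Fin 2)) = y * x * y⁻¹ by simp [Case4Aux.a2]]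
        rw [MonoidHom.comp_apply, hΦ, FreeGroup.lift_apply_of]
        rfl
    have ha2 : Case4Aux.a2 w = gf := by
      have h3 : ((MonoidHom.fst F₂ A).comp Φ) w = (Φ w).1 := rfl
      rw [← hcomp, h3, hw]
    have hwL : w ∈ Case4Aux.L := Case4Aux.lemmaM (by rw [ha2]; exact hfst)
    have hmem : (gf, ga) ∈ Subgroup.map Φ Case4Aux.L := ⟨w, hwL, hw⟩
    rw [Case4Aux.L, MonoidHom.map_closure] at hmem
    have hle : Subgroup.closure (Φ '' {x ^ 3, y ^ 3}) ≤
        Subgroup.closure {((x ^ 6 : F₂), v (6, 6)), ((y * x ^ 3 * y⁻¹ : F₂), v (0, 0))} := by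
      rw [Subgroup.closure_le]
      rintro p ⟨u, hu, rfl⟩
      rcases hu with rfl | rfl
      · have hval : Φ (x ^ 3) = ((x ^ 6 : F₂), v (6, 6)) := by
          rw [map_pow]
          have h0 : Φ x = ((x ^ 2 : F₂), v (2, 2)) := by
            rw [hΦ]; exact FreeGroup.lift_apply_of
          rw [h0, Prod.pow_mk]
          refine Prod.ext ?_ ?_
          · show (x ^ 2) ^ 3 = x ^ 6
            rw [← pow_mul]
          · exact v22_cube
        rw [hval]
        exact Subgroup.subset_closure (Set.mem_insert _ _)
      · have hval : Φ (y ^ 3) = ((y * x ^ 3 * y⁻¹ : F₂), v (0, 0)) := by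
          rw [map_pow]
          have h0 : Φ y = ((y * x * y⁻¹ : F₂), v (0, 0)) := by
            rw [hΦ]; exact FreeGroup.lift_apply_of
          rw [h0, Prod.pow_mk]
          refine Prod.ext ?_ ?_
          · show (y * x * y⁻¹) ^ 3 = y * x ^ 3 * y⁻¹
            simp [pow_succ, pow_one, mul_assoc, mul_inv_rev]
          · exact v00_cube
        rw [hval]
        exact Subgroup.subset_closure (Set.mem_insert_of_mem _ rfl)
    exact hle hmem
  · rw [Subgroup.closure_le]
    rintro p (rfl | rfl)
    · rw [SetLike.mem_coe, Subgroup.mem_inf]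
      constructor
      · have key : ((x ^ 3, v (3, 3)) : F₂ × A) ^ 2 = (x ^ 6, v (6, 6)) := by
          rw [Prod.pow_mk]
          refine Prod.ext ?_ ?_
          · show (x ^ 3) ^ 2 = x ^ 6
            rw [← pow_mul]
          · exact v33_sq
        have m1 : ((x ^ 3, v (3, 3)) : F₂ × A) ∈ Subgroup.closure
            {((x ^ 3 : F₂), v (3, 3)), (y * x, v b), (y ^ 3 * x * (y ^ 2)⁻¹, v c), (1, v (1, 1))} :=
          Subgroup.subset_closure (Set.mem_insert _ _)
        have h3 := pow_mem m1 2
        rwa [key] at h3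
      · have key : ((x ^ 2, v (2, 2)) : F₂ × A) ^ 3 = (x ^ 6, v (6, 6)) := by
          rw [Prod.pow_mk]
          refine Prod.ext ?_ ?_
          · show (x ^ 2) ^ 3 = x ^ 6
            rw [← pow_mul]
          · exact v22_cube
        have m1 : ((x ^ 2, v (2, 2)) : F₂ × A) ∈ Subgroup.closure
            {((x ^ 2 : F₂), v (2, 2)), (y * x * y⁻¹, v (0, 0))} :=
          Subgroup.subset_closure (Set.mem_insert _ _)
        have h3 := pow_mem m1 3
        rwa [key] at h3
    · rw [SetLike.mem_coe, Subgroup.mem_inf]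
      constructor
      · have key : ((y * x, v b) : F₂ × A) * (x ^ 3, v (3, 3)) * (y * x, v b)⁻¹ *
            ((1, v (1, 1)) : F₂ × A)⁻¹ ^ 3 = (y * x ^ 3 * y⁻¹, v (0, 0)) := by
          rw [Prod.inv_mk, Prod.inv_mk, Prod.pow_mk, Prod.mk_mul_mk, Prod.mk_mul_mk,
            Prod.mk_mul_mk]
          refine Prod.ext ?_ ?_
          · show y * x * x ^ 3 * (y * x)⁻¹ * (1 : F₂)⁻¹ ^ 3 = y * x ^ 3 * y⁻¹
            simp [pow_succ, pow_one, mul_assoc, mul_inv_rev]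
          · show v b * v (3, 3) * (v b)⁻¹ * (v (1, 1))⁻¹ ^ 3 = v (0, 0)
            rw [mul_comm (v b) (v (3, 3)), mul_inv_cancel_right, inv_pow, v_cube]
            show v (3, 3) * (v (3, 3))⁻¹ = v (0, 0)
            rw [mul_inv_cancel]
            rfl
        have m1 : ((y * x, v b) : F₂ × A) ∈ Subgroup.closure
            {((x ^ 3 : F₂), v (3, 3)), (y * x, v b), (y ^ 3 * x * (y ^ 2)⁻¹, v c), (1, v (1, 1))} :=
          Subgroup.subset_closure (Set.mem_insert_of_mem _ (Set.mem_insert _ _))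
        have m2 : ((x ^ 3, v (3, 3)) : F₂ × A) ∈ Subgroup.closure
            {((x ^ 3 : F₂), v (3, 3)), (y * x, v b), (y ^ 3 * x * (y ^ 2)⁻¹, v c), (1, v (1, 1))} :=
          Subgroup.subset_closure (Set.mem_insert _ _)
        have m4 : ((1, v (1, 1)) : F₂ × A) ∈ Subgroup.closure
            {((x ^ 3 : F₂), v (3, 3)), (y * x, v b), (y ^ 3 * x * (y ^ 2)⁻¹, v c), (1, v (1, 1))} :=
          Subgroup.subset_closure (Set.mem_insert_of_mem _ (Set.mem_insert_of_mem _
            (Set.mem_insert_of_mem _ rfl)))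
        have h3 := mul_mem (mul_mem (mul_mem m1 m2) (inv_mem m1)) (pow_mem (inv_mem m4) 3)
        rwa [key] at h3
      · have key : ((y * x * y⁻¹, v (0, 0)) : F₂ × A) ^ 3 = (y * x ^ 3 * y⁻¹, v (0, 0)) := by
          rw [Prod.pow_mk]
          refine Prod.ext ?_ ?_
          · show (y * x * y⁻¹) ^ 3 = y * x ^ 3 * y⁻¹
            simp [pow_succ, pow_one, mul_assoc, mul_inv_rev]
          · exact v00_cube
        have m1 : ((y * x * y⁻¹, v (0, 0)) : F₂ × A) ∈ Subgroup.closure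
            {((x ^ 2 : F₂), v (2, 2)), (y * x * y⁻¹, v (0, 0))} :=
          Subgroup.subset_closure (Set.mem_insert_of_mem _ rfl)
        have h3 := pow_mem m1 3
        rwa [key] at h3

end ParamExampleCase4
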